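/- Let D ⊆ ℝ be a convex set, let φ : ℝ → ℝ be increasing and continuously differentiable with Φ := φ' strictly positive on D, and let f : D^d → D be continuously differentiable. Then for every x = (x₁,…,x_d) and x̂ = (x̂₁,…,x̂_d) in D^d there exists x̃ = (x̃₁,…,x̃_d) ∈ D^d (lying on the segment between x and x̂) such that |φ(f(x)) − φ(f(x̂))| ≤ Σ_{i=1}^d (Φ(f(x̃))/Φ(x̃_i)) · |∂f/∂x_i (x̃)| · |φ(x_i) − φ(x̂_i)|. -/

import Mathlib

/-- Mean-value decay step: for a convex set D ⊆ ℝ, an increasing C¹ function φ with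
    Φ = φ' > 0 on D, and a C¹ function f : D^d → D, for all x, x̂ ∈ D^d there is a
    point x̃ ∈ D^d, lying (coordinatewise) on the segment between x and x̂, with
    |φ(f(x)) − φ(f(x̂))| ≤ Σᵢ (Φ(f(x̃))/Φ(x̃ᵢ))·|∂f/∂xᵢ(x̃)|·|φ(xᵢ) − φ(x̂ᵢ)|. -/
theorem stmt_3 (D : Set ℝ) (hD : Convex ℝ D)
    (φ : ℝ → ℝ) (hφmono : StrictMono φ) (hφC1 : ContDiff ℝ 1 φ)
    (hΦ : ∀ x ∈ D, 0 < deriv φ x)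
    (d : ℕ) (f : (Fin d → ℝ) → ℝ) (hfC1 : ContDiff ℝ 1 f)
    (hf : ∀ x : Fin d → ℝ, (∀ i, x i ∈ D) → f x ∈ D)
    (x xhat : Fin d → ℝ) (hx : ∀ i, x i ∈ D) (hxhat : ∀ i, xhat i ∈ D) :
    ∃ y : Fin d → ℝ, (∀ i, y i ∈ D) ∧ (∀ i, y i ∈ segment ℝ (x i) (xhat i)) ∧
      |φ (f x) - φ (f xhat)| ≤
        ∑ i : Fin d, (deriv φ (f y) / deriv φ (y i)) *
            |deriv (fun t => f (Function.update y i t)) (y i)| *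
            |φ (x i) - φ (xhat i)| := by
  set g := Function.invFun φ with hgdef
  have hφcont : Continuous φ := hφC1.continuous
  have hφdiff : Differentiable ℝ φ := hφC1.differentiable one_ne_zero
  have hfdiff : Differentiable ℝ f := hfC1.differentiable one_ne_zero
  have hgl : ∀ b, g (φ b) = b := Function.leftInverse_invFun hφmono.injective
  have hginv : ∀ z ∈ Set.range φ, φ (g z) = z := fun z hz => Function.invFun_eq hz
  have hrange_nhds : ∀ b : ℝ, Set.range φ ∈ nhds (φ b) := by
    intro b
    have hsub : Set.Ioo (φ (b-1)) (φ (b+1)) ⊆ Set.range φ :=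
      subset_trans (intermediate_value_Ioo (by linarith) hφcont.continuousOn)
        (Set.image_subset_range _ _)
    exact Filter.mem_of_superset (isOpen_Ioo.mem_nhds
      ⟨hφmono (by linarith), hφmono (by linarith)⟩) hsub
  have hgcont : ∀ b : ℝ, ContinuousAt g (φ b) := by
    intro b
    rw [ContinuousAt, hgl b, tendsto_order]
    constructor
    · intro l hl
      have hmem : Set.Ioo (φ l) (φ (b+1)) ∈ nhds (φ b) :=
        isOpen_Ioo.mem_nhds ⟨hφmono hl, hφmono (by linarith)⟩
      have hsub : Set.Ioo (φ l) (φ (b+1)) ⊆ Set.range φ :=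
        subset_trans (intermediate_value_Ioo (le_of_lt (by linarith)) hφcont.continuousOn)
          (Set.image_subset_range _ _)
      filter_upwards [hmem] with z hz
      have : φ l < φ (g z) := by rw [hginv z (hsub hz)]; exact hz.1
      exact hφmono.lt_iff_lt.mp this
    · intro l hl
      have hmem : Set.Ioo (φ (b-1)) (φ l) ∈ nhds (φ b) :=
        isOpen_Ioo.mem_nhds ⟨hφmono (by linarith), hφmono hl⟩
      have hsub : Set.Ioo (φ (b-1)) (φ l) ⊆ Set.range φ :=
        subset_trans (intermediate_value_Ioo (le_of_lt (by linarith)) hφcont.continuousOn)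
          (Set.image_subset_range _ _)
      filter_upwards [hmem] with z hz
      have : φ (g z) < φ l := by rw [hginv z (hsub hz)]; exact hz.2
      exact hφmono.lt_iff_lt.mp this
  have hgderiv : ∀ z ∈ Set.range φ, g z ∈ D → HasDerivAt g (deriv φ (g z))⁻¹ z := by
    intro z hz hzD
    have h1 : φ (g z) = z := hginv z hz
    have hc : ContinuousAt g z := by rw [← h1]; exact hgcont (g z)
    refine HasDerivAt.of_local_left_inverse hc ((hφdiff (g z)).hasDerivAt)
      (ne_of_gt (hΦ _ hzD)) ?_
    have hn : Set.range φ ∈ nhds z := by rw [← h1]; exact hrange_nhds (g z)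
    filter_upwards [hn] with w hw using hginv w hw
  -- the path
  set u : Fin d → ℝ → ℝ := fun i t => φ (x i) + t * (φ (xhat i) - φ (x i)) with hudef
  set c : ℝ → Fin d → ℝ := fun t i => g (u i t) with hcdef
  have hu_mem : ∀ i, ∀ t ∈ Set.Icc (0:ℝ) 1, u i t ∈ Set.uIcc (φ (x i)) (φ (xhat i)) := by
    intro i t ht
    have : u i t ∈ segment ℝ (φ (x i)) (φ (xhat i)) := by
      refine ⟨1 - t, t, by linarith [ht.2], ht.1, by ring, by simp [hudef]; ring⟩
    rw [segment_eq_uIcc] at this; exact this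
  have hu_range : ∀ i, ∀ t ∈ Set.Icc (0:ℝ) 1, u i t ∈ Set.range φ := by
    intro i t ht
    have hsub : Set.uIcc (φ (x i)) (φ (xhat i)) ⊆ Set.range φ :=
      subset_trans (intermediate_value_uIcc hφcont.continuousOn) (Set.image_subset_range _ _)
    exact hsub (hu_mem i t ht)
  have hc_mem : ∀ i, ∀ t ∈ Set.Icc (0:ℝ) 1, c t i ∈ Set.uIcc (x i) (xhat i) := by
    intro i t ht
    have h1 : φ (c t i) = u i t := hginv _ (hu_range i t ht)
    have h2 := hu_mem i t ht
    rw [← h1] at h2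
    rw [Set.mem_uIcc] at h2 ⊢
    rcases h2 with ⟨ha, hb⟩ | ⟨ha, hb⟩
    · exact Or.inl ⟨hφmono.le_iff_le.mp ha, hφmono.le_iff_le.mp hb⟩
    · exact Or.inr ⟨hφmono.le_iff_le.mp ha, hφmono.le_iff_le.mp hb⟩
  have hc_D : ∀ i, ∀ t ∈ Set.Icc (0:ℝ) 1, c t i ∈ D := by
    intro i t ht
    exact hD.ordConnected.uIcc_subset (hx i) (hxhat i) (hc_mem i t ht)
  -- derivative of the path
  set v : ℝ → Fin d → ℝ := fun t i => (deriv φ (c t i))⁻¹ * (φ (xhat i) - φ (x i)) with hvdef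
  have hc_deriv : ∀ t ∈ Set.Icc (0:ℝ) 1, HasDerivAt c (v t) t := by
    intro t ht
    rw [hasDerivAt_pi]
    intro i
    have hu : HasDerivAt (fun s => u i s) (φ (xhat i) - φ (x i)) t := by
      simpa [hudef, mul_comm] using ((hasDerivAt_id t).const_mul (φ (xhat i) - φ (x i))).const_add (φ (x i))
    have hgd : HasDerivAt g (deriv φ (g (u i t)))⁻¹ (u i t) :=
      hgderiv _ (hu_range i t ht) (hc_D i t ht)
    simpa [hvdef, hcdef, mul_comm, Function.comp_def] using hgd.comp t hu
  set F : ℝ → ℝ := fun t => φ (f (c t)) with hFdef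
  set F' : ℝ → ℝ := fun t => deriv φ (f (c t)) * (fderiv ℝ f (c t) (v t)) with hF'def
  have hF_deriv : ∀ t ∈ Set.Icc (0:ℝ) 1, HasDerivAt F (F' t) t := by
    intro t ht
    have h1 : HasDerivAt (fun s => f (c s)) (fderiv ℝ f (c t) (v t)) t :=
      (hfdiff (c t)).hasFDerivAt.comp_hasDerivAt t (hc_deriv t ht)
    exact (hφdiff (f (c t))).hasDerivAt.comp t h1
  have hc0 : c 0 = x := by funext i; simp [hcdef, hudef, hgl]
  have hc1 : c 1 = xhat := by
    funext i
    have : u i 1 = φ (xhat i) := by simp [hudef]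
    simp [hcdef, this, hgl]
  obtain ⟨t₀, ht₀, hslope⟩ := exists_hasDerivAt_eq_slope F F' zero_lt_one
    (fun t ht => (hF_deriv t ht).continuousAt.continuousWithinAt)
    (fun t ht => hF_deriv t (Set.mem_Icc_of_Ioo ht))
  have ht₀' : t₀ ∈ Set.Icc (0:ℝ) 1 := Set.mem_Icc_of_Ioo ht₀
  refine ⟨c t₀, fun i => hc_D i t₀ ht₀', fun i => by
    rw [segment_eq_uIcc]; exact hc_mem i t₀ ht₀', ?_⟩
  -- key equalities
  have hyD : ∀ i, c t₀ i ∈ D := fun i => hc_D i t₀ ht₀'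
  have hfyD : f (c t₀) ∈ D := hf _ hyD
  have hΦfy : 0 < deriv φ (f (c t₀)) := hΦ _ hfyD
  have hΦy : ∀ i, 0 < deriv φ (c t₀ i) := fun i => hΦ _ (hyD i)
  have habs : |φ (f x) - φ (f xhat)| = |F' t₀| := by
    rw [hslope, hFdef]
    simp [hc0, hc1, abs_sub_comm]
  -- partial derivatives
  have hpartial : ∀ i, deriv (fun s => f (Function.update (c t₀) i s)) (c t₀ i)
      = fderiv ℝ f (c t₀) (Pi.single i 1) := by
    intro i
    have hupd : HasDerivAt (fun s => Function.update (c t₀) i s) (Pi.single i (1:ℝ)) (c t₀ i) := by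
      rw [hasDerivAt_pi]
      intro j
      rcases eq_or_ne j i with rfl | hj
      · simpa using (hasDerivAt_id' (c t₀ j))
      · simpa [Function.update_of_ne hj, Pi.single_eq_of_ne hj] using
          hasDerivAt_const (c t₀ i) (c t₀ j)
    have h2 : HasDerivAt (fun s => f (Function.update (c t₀) i s))
        (fderiv ℝ f (c t₀) (Pi.single i 1)) (c t₀ i) := by
      have := (hfdiff (Function.update (c t₀) i (c t₀ i))).hasFDerivAt.comp_hasDerivAt
        (c t₀ i) hupd
      simpa [Function.update_eq_self, Function.comp_def] using this
    exact h2.deriv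
  -- expand fderiv on the basis
  have hexpand : fderiv ℝ f (c t₀) (v t₀)
      = ∑ i, v t₀ i * fderiv ℝ f (c t₀) (Pi.single i 1) := by
    have hv : v t₀ = ∑ i, v t₀ i • (Pi.single i 1 : Fin d → ℝ) := by
      funext j
      simp [Finset.sum_apply, Pi.single_apply]
    conv_lhs => rw [hv]
    simp [map_sum, map_smul, smul_eq_mul]
  rw [habs, hF'def]
  simp only []
  rw [hexpand]
  calc |deriv φ (f (c t₀)) * ∑ i, v t₀ i * fderiv ℝ f (c t₀) (Pi.single i 1)|
      = deriv φ (f (c t₀)) * |∑ i, v t₀ i * fderiv ℝ f (c t₀) (Pi.single i 1)| := by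
        rw [abs_mul, abs_of_pos hΦfy]
    _ ≤ deriv φ (f (c t₀)) * ∑ i, |v t₀ i * fderiv ℝ f (c t₀) (Pi.single i 1)| := by
        exact mul_le_mul_of_nonneg_left (Finset.abs_sum_le_sum_abs _ _) (le_of_lt hΦfy)
    _ = ∑ i, deriv φ (f (c t₀)) * (|v t₀ i| * |fderiv ℝ f (c t₀) (Pi.single i 1)|) := by
        rw [Finset.mul_sum]; congr 1; funext i; rw [abs_mul]
    _ = ∑ i : Fin d, (deriv φ (f (c t₀)) / deriv φ (c t₀ i)) *
            |deriv (fun s => f (Function.update (c t₀) i s)) (c t₀ i)| *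
            |φ (x i) - φ (xhat i)| := by
        refine Finset.sum_congr rfl fun i _ => ?_
        rw [hpartial i]
        have : |v t₀ i| = |φ (x i) - φ (xhat i)| / deriv φ (c t₀ i) := by
          rw [hvdef]
          simp only []
          rw [abs_mul, abs_inv, abs_of_pos (hΦy i), abs_sub_comm]
          ring
        rw [this]
        field_simp
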